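/- On a compact Vilenkin group G of constant order κ with subgroup chain {G_n}_{n≥0} and Haar measure normalized to |G| = 1, the Riesz distribution convolution property holds at the level of Fourier transforms: for s ∉ 1 + (2πi/ln κ)ℤ, the distribution r_s with ⟨r_s, f⟩ = ((1-κ^{-1})/(1-κ^{s-1})) f(e) + ((1-κ^{-s})/(1-κ^{s-1})) ∫_G |x|_𝒢^{s-1}(f(x)-f(e)) dx satisfies lim_{s→0} ⟨r_s, f⟩ = f(e) for every locally constant f : G → ℂ. -/

import Mathlib

open MeasureTheory Filter

/-- On a compact Vilenkin group `G` of constant order `κ` with normalized Haar measure,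
the Riesz distributions `r_s`, given by
`⟨r_s, f⟩ = ((1-κ⁻¹)/(1-κ^{s-1})) f(1) + ((1-κ^{-s})/(1-κ^{s-1})) ∫_G |x|_𝒢^{s-1}(f(x)-f(1)) dx`,
satisfy `lim_{s→0} ⟨r_s, f⟩ = f(1)` for every locally constant `f : G → ℂ`. -/
theorem stmt_11 {G : Type*} [Group G] [TopologicalSpace G] [IsTopologicalGroup G]
    [CompactSpace G] [MeasurableSpace G] [BorelSpace G]
    (μ : Measure G) [μ.IsHaarMeasure] (hμ : μ Set.univ = 1)
    (Gn : ℕ → Subgroup G) (hopen : ∀ n, IsOpen (Gn n : Set G))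
    (hnorm : ∀ n, (Gn n).Normal) (hanti : StrictAnti Gn) (h0 : Gn 0 = ⊤)
    (hinter : (⨅ n, Gn n) = ⊥)
    (hbasis : ∀ U ∈ nhds (1 : G), ∃ n, (Gn n : Set G) ⊆ U)
    (κ : ℕ) (hκ : 2 ≤ κ) (hindex : ∀ n, (Gn (n + 1)).relIndex (Gn n) = κ)
    (ν : G → ℝ) (hν1 : ν 1 = 0)
    (hν : ∀ (n : ℕ) (x : G), x ∈ Gn n → x ∉ Gn (n + 1) → ν x = (κ : ℝ) ^ (-(n : ℤ)))
    (f : G → ℂ) (hf : IsLocallyConstant f) :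
    Filter.Tendsto (fun s : ℂ =>
        ((1 - (κ : ℂ)⁻¹) / (1 - (κ : ℂ) ^ (s - 1))) * f 1 +
        ((1 - (κ : ℂ) ^ (-s)) / (1 - (κ : ℂ) ^ (s - 1))) *
          ∫ x, ((ν x : ℂ) ^ (s - 1)) * (f x - f 1) ∂μ)
      (nhds 0) (nhds (f 1)) := by
  classical
  haveI : IsFiniteMeasure μ := ⟨by rw [hμ]; exact ENNReal.one_lt_top⟩
  have hκ0 : (0:ℝ) < (κ:ℝ) := by positivity
  have hκ1 : (1:ℝ) ≤ (κ:ℝ) := by exact_mod_cast Nat.one_le_of_lt hκ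
  have hκne : (κ:ℂ) ≠ 0 := by
    exact_mod_cast Nat.cast_ne_zero.mpr (by omega)
  -- f is constant equal to f 1 on some Gn N
  have hfc : IsOpen {x | f x = f 1} := hf.isOpen_fiber (f 1)
  obtain ⟨N, hN⟩ := hbasis _ (hfc.mem_nhds (by simp))
  -- bound on ‖f x - f 1‖
  obtain ⟨x₀, -, hM'⟩ := isCompact_univ.exists_isMaxOn (Set.univ_nonempty)
    ((hf.continuous.sub continuous_const).norm.continuousOn)
  have hM : ∀ x, ‖f x - f 1‖ ≤ ‖f x₀ - f 1‖ := fun x => hM' (Set.mem_univ x)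
  set M : ℝ := ‖f x₀ - f 1‖ with hMdef
  have hM0 : 0 ≤ M := norm_nonneg _
  set C : ℝ := (κ:ℝ) ^ (2*N) * M with hCdef
  have hC0 : 0 ≤ C := by positivity
  -- key bound on the integral
  have key : ∀ s : ℂ, -1 ≤ s.re →
      ‖∫ x, ((ν x : ℂ) ^ (s - 1)) * (f x - f 1) ∂μ‖ ≤ C := by
    intro s hs
    have hb : ∀ᵐ x ∂μ, ‖((ν x : ℂ) ^ (s - 1)) * (f x - f 1)‖ ≤ C := by
      filter_upwards with x
      by_cases hx : x ∈ Gn N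
      · have hfx : f x = f 1 := hN hx
        simp [hfx, hC0]
      · have hex : ∃ j, x ∉ Gn j := ⟨N, hx⟩
        have hm : x ∉ Gn (Nat.find hex) := Nat.find_spec hex
        have hmN : Nat.find hex ≤ N := Nat.find_le hx
        have hm0 : Nat.find hex ≠ 0 := by
          intro h
          apply hm
          rw [h, h0]
          trivial
        obtain ⟨k, hk⟩ := Nat.exists_eq_succ_of_ne_zero hm0
        have hxk : x ∈ Gn k := by
          by_contra h
          exact Nat.find_min hex (by omega) h
        have hνx : ν x = (κ:ℝ) ^ (-(k:ℤ)) := hν k x hxk (by rw [← Nat.succ_eq_add_one, ← hk]; exact hm)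
        have hkN : k < N := by omega
        have hbpos : (0:ℝ) < (κ:ℝ) ^ k := by positivity
        have hνx' : ν x = ((κ:ℝ) ^ k)⁻¹ := by
          rw [hνx, zpow_neg, zpow_natCast]
        have hνpos : 0 < ν x := by rw [hνx']; positivity
        have hνle1 : ν x ≤ 1 := by
          rw [hνx']
          exact inv_le_one_of_one_le₀ (one_le_pow₀ hκ1)
        have hnorm1 : ‖((ν x : ℂ) ^ (s - 1))‖ = (ν x) ^ ((s-1).re) := by
          rw [Complex.norm_cpow_eq_rpow_re_of_pos hνpos]
        have hle1 : (ν x) ^ ((s-1).re) ≤ (ν x) ^ (-2 : ℝ) := by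
          apply Real.rpow_le_rpow_of_exponent_ge hνpos hνle1
          simp only [Complex.sub_re, Complex.one_re]
          linarith
        have heq2 : (ν x) ^ (-2 : ℝ) = ((κ:ℝ) ^ k) ^ 2 := by
          rw [hνx', Real.inv_rpow hbpos.le, Real.rpow_neg hbpos.le, inv_inv,
            Real.rpow_two]
        have hle2 : ((κ:ℝ) ^ k) ^ 2 ≤ (κ:ℝ) ^ (2*N) := by
          rw [← pow_mul]
          exact pow_le_pow_right₀ hκ1 (by omega)
        calc ‖((ν x : ℂ) ^ (s - 1)) * (f x - f 1)‖
            = ‖((ν x : ℂ) ^ (s - 1))‖ * ‖f x - f 1‖ := norm_mul _ _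
          _ ≤ (κ:ℝ) ^ (2*N) * M := by
              apply mul_le_mul _ (hM x) (norm_nonneg _) (by positivity)
              rw [hnorm1]
              exact hle1.trans (heq2 ▸ hle2)
    have := norm_integral_le_of_norm_le_const hb
    rwa [measureReal_def, hμ, ENNReal.toReal_one, mul_one] at this
  -- limits of coefficients
  have hcpow : Filter.Tendsto (fun s : ℂ => (κ : ℂ) ^ s) (nhds 0) (nhds 1) := by
    have hc : Continuous (fun s : ℂ => (κ : ℂ) ^ s) :=
      continuous_id.const_cpow (Or.inl hκne)
    simpa using hc.tendsto 0
  have hden : Filter.Tendsto (fun s : ℂ => 1 - (κ : ℂ) ^ (s - 1)) (nhds 0)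
      (nhds (1 - (κ:ℂ)⁻¹)) := by
    have hc : Continuous (fun s : ℂ => (κ : ℂ) ^ (s - 1)) :=
      (continuous_id.sub continuous_const).const_cpow (Or.inl hκne)
    have := hc.tendsto 0
    simp only [zero_sub, Complex.cpow_neg_one] at this
    exact tendsto_const_nhds.sub this
  have hdenne : (1 : ℂ) - (κ:ℂ)⁻¹ ≠ 0 := by
    intro h
    have : (κ:ℂ)⁻¹ = 1 := by linear_combination -h
    have : (κ:ℂ) = 1 := by
      field_simp at this
      exact this.symm
    have : κ = 1 := by exact_mod_cast this
    omega
  have hA : Filter.Tendsto (fun s : ℂ => (1 - (κ : ℂ)⁻¹) / (1 - (κ : ℂ) ^ (s - 1)))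
      (nhds 0) (nhds 1) := by
    have := (tendsto_const_nhds (x := (1 - (κ:ℂ)⁻¹)) (f := nhds (0:ℂ))).div hden hdenne
    simpa [div_self hdenne, Pi.div_def] using this
  have hB : Filter.Tendsto (fun s : ℂ => (1 - (κ : ℂ) ^ (-s)) / (1 - (κ : ℂ) ^ (s - 1)))
      (nhds 0) (nhds 0) := by
    have hnum : Filter.Tendsto (fun s : ℂ => 1 - (κ : ℂ) ^ (-s)) (nhds 0) (nhds 0) := by
      have := hcpow.comp (by simpa using (continuous_neg.tendsto (0:ℂ)))
      have h2 := tendsto_const_nhds (x := (1:ℂ)) (f := nhds (0:ℂ)) |>.sub this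
      simpa using h2
    have := hnum.div hden hdenne
    simpa [Pi.div_def] using this
  -- integral is eventually bounded
  have hbdd : IsBoundedUnder (· ≤ ·) (nhds (0:ℂ))
      ((fun x => ‖x‖) ∘ fun s : ℂ => ∫ x, ((ν x : ℂ) ^ (s - 1)) * (f x - f 1) ∂μ) := by
    refine ⟨C, ?_⟩
    rw [Filter.eventually_map]
    have hev : ∀ᶠ s : ℂ in nhds 0, -1 ≤ s.re := by
      have : ∀ᶠ s : ℂ in nhds 0, s ∈ Metric.ball (0:ℂ) 1 :=
        Metric.ball_mem_nhds 0 one_pos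
      filter_upwards [this] with s hs
      have h1 : |s.re| ≤ ‖s‖ := Complex.abs_re_le_norm s
      have h2 : ‖s‖ < 1 := by simpa [Metric.mem_ball] using hs
      have := abs_le.mp (h1.trans h2.le)
      linarith [this.1]
    filter_upwards [hev] with s hs
    exact key s hs
  have hBI : Filter.Tendsto (fun s : ℂ =>
      ((1 - (κ : ℂ) ^ (-s)) / (1 - (κ : ℂ) ^ (s - 1))) *
        ∫ x, ((ν x : ℂ) ^ (s - 1)) * (f x - f 1) ∂μ) (nhds 0) (nhds 0) :=
    hB.zero_mul_isBoundedUnder_le hbdd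
  have := (hA.mul (tendsto_const_nhds (x := f 1))).add hBI
  simpa using this
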